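/- Fix an integer n ≥ 1 and define σ = {(a,b,c) ∈ R^3 : a ≥ 0, c ≥ 0, 2b − a ≥ 0, b + nc − a ≥ 0}, and let M be the linear map of R^3 given by the matrix with rows (1,1,−n), (0,1,0), (0,0,1). Then for all real λ, μ > 0, setting v_1 = λ(1,1,0), v_3 = μ(0,0,1), and p = (2λnμ, λnμ, λμ)/(λ + nμ): (i) p lies on the Euclidean segment from v_1 to M^{−1}v_3 = μ(n,0,1) and satisfies b = nc (i.e. p lies in the plane H); (ii) the vector v_3 − p is a positive scalar multiple of M((M^{−1}v_3) − v_1), so the concatenated path from v_1 to p to v_3 is a straight line in the integral affine structure that bends by M across H; (iii) the segment from v_1 to p lies in σ and in the hyperplane {a = b + nc}, and the segment from p to v_3 lies in σ and in the hyperplane {a = 2b}. Moreover the Euclidean segments joining any two points of the three rays R_{≥0}(1,1,0), R_{≥0}(0,1,0), R_{≥0}(0,0,1) all lie in σ. -/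

import Mathlib

open Matrix

/-- The cone `σ = {(a,b,c) : a ≥ 0, c ≥ 0, 2b − a ≥ 0, b + nc − a ≥ 0} ⊂ ℝ³`. -/
def flopCone (n : ℕ) : Set (Fin 3 → ℝ) :=
  {q | 0 ≤ q 0 ∧ 0 ≤ q 2 ∧ 0 ≤ 2 * q 1 - q 0 ∧ 0 ≤ q 1 + n * q 2 - q 0}

/-- The monodromy matrix `M` with rows `(1,1,−n), (0,1,0), (0,0,1)`, acting on `ℝ³`. -/
def monodromyMatR (n : ℕ) : Matrix (Fin 3) (Fin 3) ℝ :=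
  !![1, 1, -(n : ℝ); 0, 1, 0; 0, 0, 1]

/-- The union of the three rays `ℝ_{≥0}(1,1,0)`, `ℝ_{≥0}(0,1,0)`, `ℝ_{≥0}(0,0,1)`. -/
def flopRays : Set (Fin 3 → ℝ) :=
  {q | ∃ c : ℝ, 0 ≤ c ∧
    (q = c • ![1, 1, 0] ∨ q = c • ![0, 1, 0] ∨ q = c • ![0, 0, 1])}

lemma convex_flopCone (n : ℕ) : Convex ℝ (flopCone n) := by
  intro x hx y hy a b ha hb hab
  obtain ⟨h1, h2, h3, h4⟩ := hx
  obtain ⟨k1, k2, k3, k4⟩ := hy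
  refine ⟨?_, ?_, ?_, ?_⟩ <;>
    simp only [Pi.add_apply, Pi.smul_apply, smul_eq_mul] <;>
    nlinarith [mul_nonneg ha h1, mul_nonneg hb k1, mul_nonneg ha h2, mul_nonneg hb k2,
      mul_nonneg ha h3, mul_nonneg hb k3, mul_nonneg ha h4, mul_nonneg hb k4]

lemma convex_hyp1 (n : ℕ) : Convex ℝ {q' : Fin 3 → ℝ | q' 0 = q' 1 + n * q' 2} := by
  intro x hx y hy a b ha hb hab
  simp only [Set.mem_setOf_eq, Pi.add_apply, Pi.smul_apply, smul_eq_mul] at *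
  linear_combination a * hx + b * hy

lemma convex_hyp2 : Convex ℝ {q' : Fin 3 → ℝ | q' 0 = 2 * q' 1} := by
  intro x hx y hy a b ha hb hab
  simp only [Set.mem_setOf_eq, Pi.add_apply, Pi.smul_apply, smul_eq_mul] at *
  linear_combination a * hx + b * hy

theorem stmt16 (n : ℕ) (hn : 1 ≤ n) (lam mu : ℝ) (hlam : 0 < lam) (hmu : 0 < mu) :
    -- v₁ = λ(1,1,0), v₃ = μ(0,0,1), q = M⁻¹v₃ = μ(n,0,1),
    -- p = (2λnμ, λnμ, λμ)/(λ + nμ)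
    ∀ v1 v3 q p : Fin 3 → ℝ,
      v1 = lam • ![1, 1, 0] →
      v3 = mu • ![0, 0, 1] →
      q = mu • ![(n : ℝ), 0, 1] →
      p = (lam + n * mu)⁻¹ • ![2 * lam * n * mu, lam * n * mu, lam * mu] →
      -- `q` really is `M⁻¹v₃`:
      ((monodromyMatR n).mulVec q = v3 ∧
      -- (i) `p` lies on the segment from `v₁` to `M⁻¹v₃` and lies in the plane `H`:
      p ∈ segment ℝ v1 q ∧ p 1 = n * p 2 ∧
      -- (ii) `v₃ − p` is a positive multiple of `M(M⁻¹v₃ − v₁)`: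
      (∃ s : ℝ, 0 < s ∧ v3 - p = s • (monodromyMatR n).mulVec (q - v1)) ∧
      -- (iii) the two segments lie in `σ` and in the stated hyperplanes:
      segment ℝ v1 p ⊆ flopCone n ∩ {q' | q' 0 = q' 1 + n * q' 2} ∧
      segment ℝ p v3 ⊆ flopCone n ∩ {q' | q' 0 = 2 * q' 1} ∧
      -- moreover, Euclidean segments between points of the three rays lie in `σ`:
      ∀ a b : Fin 3 → ℝ, a ∈ flopRays → b ∈ flopRays →
        segment ℝ a b ⊆ flopCone n) := by
  intro v1 v3 q p hv1 hv3 hq hp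
  have hnr : (1 : ℝ) ≤ (n : ℝ) := by exact_mod_cast hn
  have hs : (0:ℝ) < lam + n * mu := by nlinarith
  have hsne : (lam + n * mu) ≠ 0 := ne_of_gt hs
  subst hv1 hv3 hq hp
  have hpc : ∀ i, ((lam + n * mu)⁻¹ • ![2 * lam * n * mu, lam * n * mu, lam * mu] : Fin 3 → ℝ) i
      = (lam + n * mu)⁻¹ * (![2 * lam * n * mu, lam * n * mu, lam * mu] i) := fun i => rfl
  refine ⟨?_, ?_, ?_, ?_, ?_, ?_, ?_⟩
  · funext i
    fin_cases i <;>
      simp [monodromyMatR, Matrix.mulVec, dotProduct, Fin.sum_univ_three] <;> ring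
  · refine ⟨n * mu / (lam + n * mu), lam / (lam + n * mu), by positivity, by positivity,
      by field_simp; ring, ?_⟩
    funext i
    fin_cases i <;>
      simp [Pi.smul_apply, smul_eq_mul] <;> field_simp <;> ring
  · simp [Pi.smul_apply, smul_eq_mul]
    field_simp
  · refine ⟨n * mu / (lam + n * mu), by positivity, ?_⟩
    funext i
    fin_cases i <;>
      simp [monodromyMatR, Matrix.mulVec, dotProduct, Fin.sum_univ_three,
        Pi.smul_apply, smul_eq_mul] <;> field_simp <;> ring
  · apply Set.Subset.trans (Convex.segment_subset (Convex.inter (convex_flopCone n) (convex_hyp1 n)) ?_ ?_) (le_refl _)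
    · constructor
      · refine ⟨?_, ?_, ?_, ?_⟩ <;> simp [Pi.smul_apply, smul_eq_mul] <;> nlinarith
      · simp [Pi.smul_apply, smul_eq_mul]
    · constructor
      · refine ⟨?_, ?_, ?_, ?_⟩ <;> simp [Pi.smul_apply, smul_eq_mul] <;>
          first
          | positivity
          | (apply le_of_eq; ring)
          | (field_simp; ring)
      · simp [Pi.smul_apply, smul_eq_mul]; field_simp; ring
  · apply Set.Subset.trans (Convex.segment_subset (Convex.inter (convex_flopCone n) convex_hyp2) ?_ ?_) (le_refl _)
    · constructor
      · refine ⟨?_, ?_, ?_, ?_⟩ <;> simp [Pi.smul_apply, smul_eq_mul] <;>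
          first
          | positivity
          | (apply le_of_eq; ring)
          | (field_simp; ring)
      · simp [Pi.smul_apply, smul_eq_mul]; field_simp
    · constructor
      · refine ⟨?_, ?_, ?_, ?_⟩ <;> simp [Pi.smul_apply, smul_eq_mul] <;> nlinarith
      · simp [Pi.smul_apply, smul_eq_mul]
  · intro a b ha hb
    have hgen : ∀ x ∈ flopRays, x ∈ flopCone n := by
      rintro x ⟨c, hc, h | h | h⟩ <;> subst h <;>
        refine ⟨?_, ?_, ?_, ?_⟩ <;> simp [Pi.smul_apply, smul_eq_mul] <;> nlinarith [hc, mul_nonneg (Nat.cast_nonneg n : (0:ℝ) ≤ n) hc]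
    exact (convex_flopCone n).segment_subset (hgen a ha) (hgen b hb)
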